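/- Let m ≥ 2 and r ≥ 1, let (W,∇) be a formal connection with pole order m on a free ℂ[[z]]-module W of rank r, and let π : W ⊗_{ℂ[[z]]} ℂ[[w]] → ℂ[[w]] be a surjective ℂ[[w]]-linear map such that π∘D = ∇_{ν̃}∘π for some ν̃ ∈ ℂ[[w]]. If the coefficient of w^1 in ν̃ is nonzero, then the ℂ[[z]]-linear map W → ℂ[[w]], a ↦ π(a⊗1), is bijective. -/

import Mathlib

open PowerSeries TensorProduct

noncomputable section

/-- A formal connection with pole order `m` on a `ℂ[[z]]`-module `W`, written in the
trivializing frame `dz/z^m`: an additive map `Dc : W → W` satisfying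
`Dc(f • a) = (z^m * f') • a + f • Dc a`. -/
def IsFormalConnection (m : ℕ) {W : Type*} [AddCommGroup W] [Module (PowerSeries ℂ) W]
    (Dc : W →+ W) : Prop :=
  ∀ (f : PowerSeries ℂ) (a : W),
    Dc (f • a) = ((X : PowerSeries ℂ) ^ m * PowerSeries.derivative ℂ f) • a + f • Dc a

/-- The ring `ℂ[[w]]`, regarded as a `ℂ[[z]]`-algebra via `z = w^r`. -/
def Cw (_r : ℕ) : Type := PowerSeries ℂ

instance (r : ℕ) : CommRing (Cw r) := inferInstanceAs (CommRing (PowerSeries ℂ))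

/-- The substitution ring homomorphism `ℂ[[z]] → ℂ[[w]]`, `f(z) ↦ f(w^r)`. -/
noncomputable def substPow (r : ℕ) : PowerSeries ℂ →+* Cw r :=
  if h : 0 < r then
    (HahnSeries.toPowerSeries.toRingHom.comp
      ((HahnSeries.embDomainRingHom (AddMonoidHom.mulLeft r)
          (fun a b hab => Nat.eq_of_mul_eq_mul_left h (by simpa using hab))
          (fun a b => by
            simp only [AddMonoidHom.coe_mulLeft]
            exact ⟨fun hh => Nat.le_of_mul_le_mul_left hh h,
              fun hh => Nat.mul_le_mul_left _ hh⟩)).comp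
        HahnSeries.toPowerSeries.symm.toRingHom))
  else (PowerSeries.C (R := ℂ)).comp (PowerSeries.constantCoeff (R := ℂ))

noncomputable instance (r : ℕ) : Algebra (PowerSeries ℂ) (Cw r) := (substPow r).toAlgebra

/-- The element `w ∈ ℂ[[w]]`. -/
def Cw.w (r : ℕ) : Cw r := (PowerSeries.X : PowerSeries ℂ)

/-- The formal derivative `d/dw` on `ℂ[[w]]`. -/
noncomputable def Cw.deriv {r : ℕ} (f : Cw r) : Cw r :=
  (PowerSeries.derivative ℂ (show PowerSeries ℂ from f) : PowerSeries ℂ)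

/-- The coefficient of `w^n` in an element of `ℂ[[w]]`. -/
noncomputable def Cw.coeff {r : ℕ} (n : ℕ) (f : Cw r) : ℂ :=
  PowerSeries.coeff (R := ℂ) n (show PowerSeries ℂ from f)

-- ## auxiliary lemmas

namespace Statement1Aux

/-- Identity cast `ℂ[[w]] → ℂ⟦X⟧`. -/
def oc {r : ℕ} (f : Cw r) : PowerSeries ℂ := f
/-- Identity cast `ℂ⟦X⟧ → ℂ[[w]]`. -/
def tc (r : ℕ) (f : PowerSeries ℂ) : Cw r := f

@[simp] lemma oc_tc (r : ℕ) (f : PowerSeries ℂ) : oc (tc r f) = f := rfl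
@[simp] lemma tc_oc {r : ℕ} (f : Cw r) : tc r (oc f) = f := rfl
lemma oc_add {r : ℕ} (a b : Cw r) : oc (a + b) = oc a + oc b := rfl
lemma oc_sub {r : ℕ} (a b : Cw r) : oc (a - b) = oc a - oc b := rfl
lemma oc_mul {r : ℕ} (a b : Cw r) : oc (a * b) = oc a * oc b := rfl
@[simp] lemma oc_zero {r : ℕ} : oc (0 : Cw r) = 0 := rfl
@[simp] lemma oc_one {r : ℕ} : oc (1 : Cw r) = 1 := rfl
lemma oc_injective {r : ℕ} : Function.Injective (oc (r := r)) := fun _ _ h => h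
lemma oc_w {r : ℕ} : oc (Cw.w r) = PowerSeries.X := rfl
lemma oc_w_pow {r : ℕ} (k : ℕ) : oc (Cw.w r ^ k) = (PowerSeries.X : PowerSeries ℂ) ^ k := rfl
lemma oc_deriv {r : ℕ} (f : Cw r) : oc (Cw.deriv f) = PowerSeries.derivative ℂ (oc f) := rfl
lemma cw_coeff {r : ℕ} (n : ℕ) (f : Cw r) : Cw.coeff n f = PowerSeries.coeff (R := ℂ) n (oc f) := rfl
lemma oc_nsmul {r : ℕ} (n : ℕ) (a : Cw r) : oc (n • a) = n • oc a := rfl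

lemma substPow_coeff {r : ℕ} (hr : 0 < r) (f : PowerSeries ℂ) (n : ℕ) :
    PowerSeries.coeff (R := ℂ) n (oc (substPow r f)) = if r ∣ n then PowerSeries.coeff (R := ℂ) (n / r) f else 0 := by
  rw [show oc (substPow r f) = substPow r f from rfl]
  erw [substPow, dif_pos hr]
  show PowerSeries.coeff (R := ℂ) n _ = _
  simp only [RingHom.coe_comp, Function.comp_apply, RingEquiv.toRingHom_eq_coe,
    RingEquiv.coe_toRingHom, HahnSeries.embDomainRingHom_apply]
  erw [HahnSeries.coeff_toPowerSeries]
  split_ifs with h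
  · obtain ⟨k, rfl⟩ := h
    have : r * k = (⇑(AddMonoidHom.mulLeft r)) k := rfl
    erw [this, HahnSeries.embDomain_mk_coeff]
    have h2 : (AddMonoidHom.mulLeft r) k / r = k := by
      simp [AddMonoidHom.coe_mulLeft, Nat.mul_div_cancel_left k hr]
    rw [h2]
    exact HahnSeries.coeff_toPowerSeries_symm
  · erw [HahnSeries.embDomain_notin_range]
    rintro ⟨k, hk⟩
    exact h ⟨k, hk.symm⟩

lemma substPow_X {r : ℕ} (hr : 0 < r) :
    oc (substPow r PowerSeries.X) = (PowerSeries.X : PowerSeries ℂ) ^ r := by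
  ext n
  rw [substPow_coeff hr, PowerSeries.coeff_X_pow]
  by_cases h1 : r ∣ n
  · obtain ⟨k, rfl⟩ := h1
    rw [if_pos (dvd_mul_right r k), Nat.mul_div_cancel_left k hr, PowerSeries.coeff_X]
    have hiff : k = 1 ↔ r * k = r := by
      constructor
      · rintro rfl; exact mul_one r
      · intro h; exact Nat.eq_of_mul_eq_mul_left hr (h.trans (mul_one r).symm)
    by_cases hk : k = 1
    · rw [if_pos hk, if_pos (hiff.mp hk)]
    · rw [if_neg hk, if_neg (fun hh => hk (hiff.mpr hh))]
  · rw [if_neg h1, if_neg (fun h => h1 (by rw [h]))]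

lemma substPow_C {r : ℕ} (hr : 0 < r) (c : ℂ) :
    oc (substPow r (PowerSeries.C (R := ℂ) c)) = PowerSeries.C (R := ℂ) c := by
  ext n
  rw [substPow_coeff hr, PowerSeries.coeff_C, PowerSeries.coeff_C]
  by_cases hn : n = 0
  · subst hn; simp
  · rw [if_neg hn]
    by_cases h1 : r ∣ n
    · rw [if_pos h1, if_neg]
      have : 0 < n / r := Nat.div_pos (Nat.le_of_dvd (Nat.pos_of_ne_zero hn) h1) hr
      omega
    · rw [if_neg h1]

lemma smul_cw {r : ℕ} (f : PowerSeries ℂ) (g : Cw r) :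
    oc (f • g) = oc (substPow r f) * oc g := by
  rw [← oc_mul]
  exact congrArg oc (by rw [Algebra.smul_def, RingHom.algebraMap_toAlgebra])

/-- The standard `ℂ[[z]]`-linear map `ℂ[[z]]^r → ℂ[[w]]`, `(g_j) ↦ ∑_j g_j(w^r)·w^j`. -/
def Tmap (r : ℕ) : (Fin r → PowerSeries ℂ) →ₗ[PowerSeries ℂ] Cw r where
  toFun g := tc r (∑ j : Fin r, oc (substPow r (g j)) * (PowerSeries.X : PowerSeries ℂ) ^ (j : ℕ))
  map_add' g h := by
    apply oc_injective
    rw [oc_add, oc_tc, oc_tc, oc_tc, ← Finset.sum_add_distrib]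
    refine Finset.sum_congr rfl fun j _ => ?_
    rw [Pi.add_apply, map_add, oc_add, add_mul]
  map_smul' f g := by
    apply oc_injective
    simp only [RingHom.id_apply]
    rw [smul_cw, oc_tc, oc_tc, Finset.mul_sum]
    refine Finset.sum_congr rfl fun j _ => ?_
    rw [Pi.smul_apply, smul_eq_mul, map_mul, oc_mul]
    ring

lemma Tmap_coeff {r : ℕ} (hr : 0 < r) (g : Fin r → PowerSeries ℂ) (n : ℕ) :
    PowerSeries.coeff (R := ℂ) n (oc (Tmap r g))
      = PowerSeries.coeff (R := ℂ) (n / r) (g ⟨n % r, Nat.mod_lt n hr⟩) := by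
  rw [show oc (Tmap r g)
      = ∑ j : Fin r, oc (substPow r (g j)) * (PowerSeries.X : PowerSeries ℂ) ^ (j : ℕ) from rfl]
  rw [map_sum, Finset.sum_eq_single (⟨n % r, Nat.mod_lt n hr⟩ : Fin r)]
  · rw [PowerSeries.coeff_mul_X_pow', if_pos (Nat.mod_le n r), substPow_coeff hr]
    have key := Nat.div_add_mod n r
    have h1 : n - n % r = r * (n / r) := Nat.sub_eq_of_eq_add key.symm
    rw [if_pos ⟨n / r, h1⟩, h1, Nat.mul_div_cancel_left _ hr]
  · intro j _ hj
    rw [PowerSeries.coeff_mul_X_pow']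
    by_cases hle : (j : ℕ) ≤ n
    · rw [if_pos hle, substPow_coeff hr, if_neg]
      rintro ⟨t, ht⟩
      apply hj
      have hn : n = r * t + (j : ℕ) := by
        have := Nat.eq_add_of_sub_eq hle ht
        omega
      apply Fin.ext
      show (j : ℕ) = n % r
      rw [hn, Nat.mul_add_mod, Nat.mod_eq_of_lt j.isLt]
    · rw [if_neg hle]
  · intro h
    exact absurd (Finset.mem_univ _) h

lemma Tmap_injective {r : ℕ} (hr : 0 < r) : Function.Injective (Tmap r) := by
  rw [injective_iff_map_eq_zero]
  intro g hg
  funext j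
  ext k
  have h0 := Tmap_coeff hr g ((j : ℕ) + r * k)
  rw [hg] at h0
  have hmod : ((j : ℕ) + r * k) % r = (j : ℕ) := by
    rw [Nat.add_mul_mod_self_left, Nat.mod_eq_of_lt j.isLt]
  have hdiv : ((j : ℕ) + r * k) / r = k := by
    rw [Nat.add_mul_div_left _ _ hr, Nat.div_eq_of_lt j.isLt, zero_add]
  have hjj : ∀ (h : (((j:ℕ) + r * k) % r) < r), g (⟨((j:ℕ) + r * k) % r, h⟩ : Fin r) = g j :=
    fun h => congrArg g (Fin.ext hmod)
  rw [hjj, hdiv, oc_zero, map_zero] at h0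
  rw [Pi.zero_apply, map_zero, ← h0]

lemma Tmap_surjective {r : ℕ} (hr : 0 < r) : Function.Surjective (Tmap r) := by
  intro f
  refine ⟨fun j => PowerSeries.mk fun k => PowerSeries.coeff (R := ℂ) (k * r + (j : ℕ)) (oc f), ?_⟩
  apply oc_injective
  ext n
  rw [Tmap_coeff hr, PowerSeries.coeff_mk]
  exact congrArg (fun i => PowerSeries.coeff (R := ℂ) i (oc f)) (Nat.div_add_mod' n r)

lemma finite_cw {r : ℕ} (hr : 0 < r) : Module.Finite (PowerSeries ℂ) (Cw r) :=
  Module.Finite.of_surjective (Tmap r) (Tmap_surjective hr)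

lemma deriv_X_pow (j : ℕ) :
    PowerSeries.derivative ℂ ((PowerSeries.X : PowerSeries ℂ) ^ j)
      = (j : PowerSeries ℂ) * PowerSeries.X ^ (j - 1) := by
  rw [Derivation.leibniz_pow]
  simp [nsmul_eq_mul, smul_eq_mul]

lemma deriv_X_pow_mul (j : ℕ) (u : PowerSeries ℂ) :
    PowerSeries.derivative ℂ ((PowerSeries.X : PowerSeries ℂ) ^ j * u)
      = PowerSeries.X ^ j * PowerSeries.derivative ℂ u
        + (j : PowerSeries ℂ) * PowerSeries.X ^ (j - 1) * u := by
  rw [Derivation.leibniz, smul_eq_mul, smul_eq_mul, deriv_X_pow]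
  ring

/-- The key computational identity for the inductive step. -/
lemma key_identity (K j : ℕ) (u μ : PowerSeries ℂ) :
    (PowerSeries.X : PowerSeries ℂ) ^ (K + 2) * PowerSeries.derivative ℂ (PowerSeries.X ^ j * u)
        + (PowerSeries.X * μ) * (PowerSeries.X ^ j * u)
      = PowerSeries.X ^ (j + 1) *
          (PowerSeries.X ^ (K + 1) * PowerSeries.derivative ℂ u
            + PowerSeries.X ^ K * ((j : PowerSeries ℂ) * u) + μ * u) := by
  rw [deriv_X_pow_mul]
  cases j with
  | zero => simp; ring
  | succ i =>
    simp only [Nat.succ_sub_one]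
    push_cast
    ring

end Statement1Aux

open Statement1Aux

/-- Let `m ≥ 2`, `r ≥ 1`, `(W,∇)` a formal connection with pole order `m` on
a free `ℂ[[z]]`-module of rank `r`, and `π : W ⊗ ℂ[[w]] → ℂ[[w]]` a surjective `ℂ[[w]]`-linear
map intertwining the induced connection `D` with `∇_ν̃ = d + ν̃ ω` (in the frame
`ω = dw/w^N`, `N = mr - r + 1`).  If the coefficient of `w^1` in `ν̃` is nonzero, then the
restriction `W → ℂ[[w]]`, `a ↦ π(a ⊗ 1)`, is bijective. -/
theorem statement1 (m r : ℕ) (hm : 2 ≤ m) (hr : 1 ≤ r)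
    (W : Type*) [AddCommGroup W] [Module (PowerSeries ℂ) W]
    [Module.Finite (PowerSeries ℂ) W] [Module.Free (PowerSeries ℂ) W]
    (hrank : Module.finrank (PowerSeries ℂ) W = r)
    (Dc : W →+ W) (hDc : IsFormalConnection m Dc)
    (D : Cw r ⊗[PowerSeries ℂ] W →+ Cw r ⊗[PowerSeries ℂ] W)
    (hD : ∀ (g : Cw r) (a : W),
      D (g ⊗ₜ a) = r • ((g ⊗ₜ[PowerSeries ℂ] Dc a))
        + (Cw.w r ^ (m * r - r + 1) * Cw.deriv g) ⊗ₜ a)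
    (π : Cw r ⊗[PowerSeries ℂ] W →ₗ[Cw r] Cw r) (hπ : Function.Surjective π)
    (ν : Cw r)
    (hcompat : ∀ x, π (D x) =
      Cw.w r ^ (m * r - r + 1) * Cw.deriv (π x) + ν * π x)
    (hν : Cw.coeff 1 ν ≠ 0) :
    Function.Bijective (fun a : W => π ((1 : Cw r) ⊗ₜ a)) := by
  classical
  have hr0 : 0 < r := hr
  set N := m * r - r + 1 with hNdef
  have h2r : 2 * r ≤ m * r := Nat.mul_le_mul_right r hm
  have hN2 : 2 ≤ N := by omega
  have hν' : PowerSeries.coeff (R := ℂ) 1 (oc ν) ≠ 0 := hν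
  -- the ℂ[[z]]-action on the tensor product is via `substPow`
  have smul_tensor : ∀ (f : PowerSeries ℂ) (x : Cw r ⊗[PowerSeries ℂ] W),
      f • x = substPow r f • x := by
    intro f x
    induction x using TensorProduct.induction_on with
    | zero => simp
    | tmul g a =>
      rw [TensorProduct.smul_tmul', TensorProduct.smul_tmul']
      congr 1
    | add x y hx hy => rw [smul_add, smul_add, hx, hy]
  -- the restriction of π to W, as a ℂ[[z]]-linear map
  let φ : W →ₗ[PowerSeries ℂ] Cw r :=
    { toFun := fun a => π ((1 : Cw r) ⊗ₜ a)
      map_add' := fun a b => by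
        show π ((1 : Cw r) ⊗ₜ (a + b)) = π ((1 : Cw r) ⊗ₜ a) + π ((1 : Cw r) ⊗ₜ b)
        rw [TensorProduct.tmul_add, map_add]
      map_smul' := fun f a => by
        simp only [RingHom.id_apply]
        rw [TensorProduct.tmul_smul, smul_tensor, map_smul]
        apply oc_injective
        rw [smul_cw]
        exact oc_mul _ _ }
  have hφdef : ∀ a : W, φ a = π ((1 : Cw r) ⊗ₜ a) := fun _ => rfl
  have hπ_tmul : ∀ (g : Cw r) (a : W), π (g ⊗ₜ a) = g * φ a := by
    intro g a
    have hgt : g ⊗ₜ[PowerSeries ℂ] a = g • ((1 : Cw r) ⊗ₜ[PowerSeries ℂ] a) := by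
      rw [TensorProduct.smul_tmul', smul_eq_mul, mul_one]
    rw [hgt, map_smul, smul_eq_mul, hφdef]
  -- base case: some φ a has nonzero constant coefficient
  have hbase : ∃ a : W, PowerSeries.constantCoeff (R := ℂ) (oc (φ a)) ≠ 0 := by
    by_contra hcon
    push_neg at hcon
    have hall : ∀ x, PowerSeries.constantCoeff (R := ℂ) (oc (π x)) = 0 := by
      intro x
      induction x using TensorProduct.induction_on with
      | zero => rw [map_zero]; simp
      | tmul g a => rw [hπ_tmul, oc_mul, map_mul, hcon a, mul_zero]
      | add x y hx hy => rw [map_add, oc_add, map_add, hx, hy, add_zero]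
    obtain ⟨x, hx⟩ := hπ 1
    have hcc := hall x
    rw [hx] at hcc
    simp at hcc
  -- the image of W is stable under the connection ∇_ν
  have hclos : ∀ a : W, ∃ b : W, oc (φ b)
      = (PowerSeries.X : PowerSeries ℂ) ^ N * PowerSeries.derivative ℂ (oc (φ a))
        + oc ν * oc (φ a) := by
    intro a
    refine ⟨r • Dc a, ?_⟩
    have h1 := hcompat ((1 : Cw r) ⊗ₜ a)
    have h2 := hD 1 a
    have hder1 : Cw.deriv (1 : Cw r) = 0 := by
      apply oc_injective
      rw [oc_deriv, oc_one, oc_zero]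
      simp
    rw [hder1, mul_zero, TensorProduct.zero_tmul, add_zero] at h2
    rw [h2, map_nsmul] at h1
    have h3 : φ (r • Dc a) = r • φ (Dc a) := map_nsmul φ r (Dc a)
    calc oc (φ (r • Dc a)) = oc (r • π ((1 : Cw r) ⊗ₜ Dc a)) := by rw [h3, hφdef]
      _ = oc (Cw.w r ^ N * Cw.deriv (π ((1 : Cw r) ⊗ₜ a)) + ν * π ((1 : Cw r) ⊗ₜ a)) := by
          rw [h1]
      _ = _ := by rw [oc_add, oc_mul, oc_mul, oc_w_pow, oc_deriv, hφdef]
  -- elements of every valuation j < r in the image of W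
  have horder : ∀ j, j < r → ∃ (a : W) (u : PowerSeries ℂ),
      oc (φ a) = PowerSeries.X ^ j * u ∧ PowerSeries.constantCoeff (R := ℂ) u ≠ 0 := by
    intro j
    induction j with
    | zero =>
      intro _
      obtain ⟨a, ha⟩ := hbase
      exact ⟨a, oc (φ a), by rw [pow_zero, one_mul], ha⟩
    | succ i ih =>
      intro hi
      obtain ⟨a, u, hau, hu⟩ := ih (by omega)
      have hN3 : 3 ≤ N := by omega
      obtain ⟨K, hK1, hKN⟩ : ∃ K, 1 ≤ K ∧ N = K + 2 := ⟨N - 2, by omega, by omega⟩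
      set ν0 := PowerSeries.constantCoeff (R := ℂ) (oc ν) with hν0
      obtain ⟨μc, hμ⟩ : (PowerSeries.X : PowerSeries ℂ) ∣
          (oc ν - PowerSeries.C (R := ℂ) ν0) := by
        rw [PowerSeries.X_dvd_iff]
        simp [hν0]
      obtain ⟨b, hb⟩ := hclos a
      have hμ0 : PowerSeries.constantCoeff (R := ℂ) μc = PowerSeries.coeff (R := ℂ) 1 (oc ν) := by
        have hcoeq := congrArg (PowerSeries.coeff (R := ℂ) 1) hμ
        rw [map_sub, PowerSeries.coeff_succ_X_mul, PowerSeries.coeff_C] at hcoeq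
        simp only [one_ne_zero, if_false, sub_zero] at hcoeq
        rw [← PowerSeries.coeff_zero_eq_constantCoeff_apply, ← hcoeq]
    
      refine ⟨b - (PowerSeries.C (R := ℂ) ν0) • a,
        PowerSeries.X ^ (K + 1) * PowerSeries.derivative ℂ u
          + PowerSeries.X ^ K * ((i : PowerSeries ℂ) * u) + μc * u, ?_, ?_⟩
      · have hφsub : φ (b - (PowerSeries.C (R := ℂ) ν0) • a) = φ b - φ ((PowerSeries.C (R := ℂ) ν0) • a) :=
          map_sub φ _ _
        have hφsmul : oc (φ ((PowerSeries.C (R := ℂ) ν0) • a))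
            = PowerSeries.C (R := ℂ) ν0 * oc (φ a) := by
          rw [map_smul φ, smul_cw, substPow_C hr0]
        rw [hφsub, oc_sub, hb, hφsmul, hau, hKN]
        linear_combination (key_identity K i u μc) + (PowerSeries.X ^ i * u) * hμ
      · have hXmul : ∀ (k : ℕ) (f : PowerSeries ℂ), 1 ≤ k →
            PowerSeries.constantCoeff (R := ℂ) ((PowerSeries.X : PowerSeries ℂ) ^ k * f) = 0 := by
          intro k f hk
          rw [← PowerSeries.coeff_zero_eq_constantCoeff_apply, PowerSeries.coeff_X_pow_mul',
            if_neg (by omega)]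
        rw [map_add, map_add, hXmul _ _ (by omega), hXmul _ _ hK1, map_mul, hμ0]
        simpa using mul_ne_zero hν' hu
  -- the range of φ
  set Mr := LinearMap.range φ with hMrdef
  have hmem : ∀ a : W, φ a ∈ Mr := fun a => ⟨a, rfl⟩
  -- successive elimination of coefficients below r
  have helim : ∀ (f : Cw r) (k : ℕ), k ≤ r → ∃ g, g ∈ Mr ∧
      ∀ i, i < k → PowerSeries.coeff (R := ℂ) i (oc f - oc g) = 0 := by
    intro f k
    induction k with
    | zero => exact fun _ => ⟨0, zero_mem _, fun i hi => absurd hi (by omega)⟩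
    | succ k ihk =>
      intro hk1
      obtain ⟨g, hgM, hgc⟩ := ihk (by omega)
      obtain ⟨a, u, hau, hu⟩ := horder k (by omega)
      set c := PowerSeries.coeff (R := ℂ) k (oc f - oc g) / PowerSeries.constantCoeff (R := ℂ) u with hc
      refine ⟨g + (PowerSeries.C (R := ℂ) c) • (φ a),
        Submodule.add_mem _ hgM (Submodule.smul_mem _ _ (hmem a)), ?_⟩
      intro i hi
      have hsm : oc ((PowerSeries.C (R := ℂ) c) • (φ a))
          = PowerSeries.C (R := ℂ) c * (PowerSeries.X ^ k * u) := by
        rw [smul_cw, substPow_C hr0, hau]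
      rw [oc_add, hsm,
        show oc f - (oc g + PowerSeries.C (R := ℂ) c * (PowerSeries.X ^ k * u))
          = (oc f - oc g) - PowerSeries.C (R := ℂ) c * (PowerSeries.X ^ k * u) from by ring,
        map_sub]
      by_cases hik : i < k
      · rw [hgc i hik, PowerSeries.coeff_C_mul, PowerSeries.coeff_X_pow_mul',
          if_neg (by omega), mul_zero, sub_zero]
      · have hik' : i = k := by omega
        subst hik'
        rw [PowerSeries.coeff_C_mul, PowerSeries.coeff_X_pow_mul', if_pos (le_refl _),
          Nat.sub_self, PowerSeries.coeff_zero_eq_constantCoeff_apply, hc,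
          div_mul_cancel₀ _ hu, sub_self]
  -- Nakayama
  have hMfin : Module.Finite (PowerSeries ℂ) (Cw r) := finite_cw hr0
  have htop : Mr = ⊤ := by
    have hle : (⊤ : Submodule (PowerSeries ℂ) (Cw r)) ≤
        Mr ⊔ (Ideal.span {(PowerSeries.X : PowerSeries ℂ)} : Ideal (PowerSeries ℂ)) • (⊤ : Submodule (PowerSeries ℂ) (Cw r)) := by
      intro f _
      obtain ⟨g, hgM, hgc⟩ := helim f r le_rfl
      have hdvd : (PowerSeries.X : PowerSeries ℂ) ^ r ∣ (oc f - oc g) :=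
        PowerSeries.X_pow_dvd_iff.mpr (fun i hi => hgc i hi)
      obtain ⟨h, hh⟩ := hdvd
      have hfg : f = g + (PowerSeries.X : PowerSeries ℂ) • (tc r h) := by
        apply oc_injective
        rw [oc_add, smul_cw, substPow_X hr0, oc_tc]
        rw [show oc g + PowerSeries.X ^ r * h = oc g + (oc f - oc g) from by rw [hh]]
        ring
      rw [hfg]
      exact Submodule.add_mem _ (Submodule.mem_sup_left hgM)
        (Submodule.mem_sup_right (Submodule.smul_mem_smul (Ideal.subset_span rfl) trivial))
    have hjac : (Ideal.span {(PowerSeries.X : PowerSeries ℂ)} : Ideal (PowerSeries ℂ)) ≤ Ideal.jacobson ⊥ := by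
      rw [IsLocalRing.jacobson_eq_maximalIdeal ⊥ bot_ne_top, PowerSeries.maximalIdeal_eq_span_X]
    have hfg2 : (⊤ : Submodule (PowerSeries ℂ) (Cw r)).FG := Module.finite_def.mp hMfin
    exact le_antisymm le_top (Submodule.le_of_le_smul_of_le_jacobson_bot hfg2 hjac hle)
  have hφsurj : Function.Surjective φ := LinearMap.range_eq_top.mp htop
  -- injectivity
  have hcard : Fintype.card (Module.Free.ChooseBasisIndex (PowerSeries ℂ) W) = r := by
    rw [← Module.finrank_eq_card_chooseBasisIndex, hrank]
  let e0 := (Module.Free.chooseBasis (PowerSeries ℂ) W).equivFun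
  let e1 : (Module.Free.ChooseBasisIndex (PowerSeries ℂ) W → PowerSeries ℂ)
      ≃ₗ[PowerSeries ℂ] (Fin r → PowerSeries ℂ) :=
    LinearEquiv.funCongrLeft _ _ (Fintype.equivFinOfCardEq hcard).symm
  let eT : (Fin r → PowerSeries ℂ) ≃ₗ[PowerSeries ℂ] Cw r :=
    LinearEquiv.ofBijective (Tmap r) ⟨Tmap_injective hr0, Tmap_surjective hr0⟩
  let ψ : W ≃ₗ[PowerSeries ℂ] Cw r := e0.trans (e1.trans eT)
  have hendo : Function.Surjective (φ ∘ₗ ψ.symm.toLinearMap) := by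
    intro y
    obtain ⟨x, hx⟩ := hφsurj y
    exact ⟨ψ x, by simp [LinearMap.comp_apply, hx]⟩
  have hinj := OrzechProperty.injective_of_surjective_endomorphism _ hendo
  have hφinj : Function.Injective φ := by
    intro a b hab
    have hcomp : (φ ∘ₗ ψ.symm.toLinearMap) (ψ a) = (φ ∘ₗ ψ.symm.toLinearMap) (ψ b) := by
      simp [LinearMap.comp_apply, hab]
    exact ψ.injective (hinj hcomp)
  exact ⟨hφinj, hφsurj⟩


end
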